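/- In a hyperbolic group G, every infinite cyclic subgroup C has finite index in its centralizer C_G(C) and in its normalizer N_G(C). In particular, a hyperbolic group contains no subgroup isomorphic to ℤⁿ for any n ≥ 2. -/

import Mathlib

/-- The word length of `g` with respect to a generating set `S`. -/
noncomputable def wordLength {G : Type*} [Group G] (S : Set G) (g : G) : ℕ :=
  sInf {n : ℕ | ∃ w : List G, w.length = n ∧ (∀ x ∈ w, x ∈ S ∨ x⁻¹ ∈ S) ∧ w.prod = g}

/-- The word metric on `G` associated to a generating set `S`. -/
noncomputable def wordDist {G : Type*} [Group G] (S : Set G) (g h : G) : ℝ :=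
  (wordLength S (g⁻¹ * h) : ℝ)

/-- A finitely generated group is hyperbolic if its word metric (equivalently, its Cayley
graph) with respect to some finite generating set satisfies Gromov's four-point
`δ`-hyperbolicity condition for some `δ ≥ 0`. -/
def IsHyperbolicGroup (G : Type*) [Group G] : Prop :=
  ∃ S : Set G, S.Finite ∧ Subgroup.closure S = ⊤ ∧
    ∃ δ : ℝ, 0 ≤ δ ∧ ∀ x y z w : G,
      wordDist S x y + wordDist S z w ≤
        max (wordDist S x z + wordDist S y w) (wordDist S x w + wordDist S y z) + δ

namespace HypAux

variable {G : Type} [Group G]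

/-- words over the symmetric alphabet -/
def IsWord (S : Set G) (w : List G) : Prop := ∀ x ∈ w, x ∈ S ∨ x⁻¹ ∈ S

theorem isWord_append {S : Set G} {w₁ w₂ : List G} (h₁ : IsWord S w₁) (h₂ : IsWord S w₂) :
    IsWord S (w₁ ++ w₂) := by
  intro x hx
  rcases List.mem_append.mp hx with h | h
  · exact h₁ x h
  · exact h₂ x h

theorem isWord_reverse_inv {S : Set G} {w : List G} (h : IsWord S w) :
    IsWord S ((w.map (·⁻¹)).reverse) := by
  intro x hx
  rw [List.mem_reverse, List.mem_map] at hx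
  obtain ⟨a, ha, rfl⟩ := hx
  rcases h a ha with h' | h'
  · exact Or.inr (by simpa using h')
  · exact Or.inl h'

theorem isWord_sublist {S : Set G} {w w' : List G} (hs : List.Sublist w' w) (h : IsWord S w) :
    IsWord S w' := fun x hx => h x (hs.mem hx)

theorem prod_reverse_inv (w : List G) : ((w.map (·⁻¹)).reverse).prod = w.prod⁻¹ := by
  induction w with
  | nil => simp
  | cons a l ih => simp [ih]

section S

variable (S : Set G)

/-- existence of a word for every element, given that S generates -/
theorem exists_word (hS : Subgroup.closure S = ⊤) (g : G) :
    ∃ w : List G, IsWord S w ∧ w.prod = g := by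
  have hg : g ∈ Subgroup.closure S := by rw [hS]; trivial
  induction hg using Subgroup.closure_induction with
  | mem x hx => exact ⟨[x], fun y hy => by simpa using Or.inl (by
      rcases List.mem_singleton.mp hy with rfl; exact hx), by simp⟩
  | one => exact ⟨[], fun x hx => by simp at hx, by simp⟩
  | mul x y hx hy ihx ihy =>
      obtain ⟨w₁, hw₁, hp₁⟩ := ihx
      obtain ⟨w₂, hw₂, hp₂⟩ := ihy
      exact ⟨w₁ ++ w₂, isWord_append hw₁ hw₂, by simp [hp₁, hp₂]⟩
  | inv x hx ihx =>
      obtain ⟨w, hw, hp⟩ := ihx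
      exact ⟨(w.map (·⁻¹)).reverse, isWord_reverse_inv hw, by rw [prod_reverse_inv, hp]⟩

theorem wordLength_set_nonempty (hS : Subgroup.closure S = ⊤) (g : G) :
    {n : ℕ | ∃ w : List G, w.length = n ∧ IsWord S w ∧ w.prod = g}.Nonempty := by
  obtain ⟨w, hw, hp⟩ := exists_word S hS g
  exact ⟨w.length, w, rfl, hw, hp⟩

/-- a minimal word realizing the word length -/
theorem exists_min_word (hS : Subgroup.closure S = ⊤) (g : G) :
    ∃ w : List G, w.length = wordLength S g ∧ IsWord S w ∧ w.prod = g := by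
  have := Nat.sInf_mem (wordLength_set_nonempty S hS g)
  exact this

theorem wordLength_le (g : G) {w : List G} (hw : IsWord S w) (hp : w.prod = g) :
    wordLength S g ≤ w.length :=
  Nat.sInf_le ⟨w, rfl, hw, hp⟩

theorem wordLength_one : wordLength S (1 : G) = 0 :=
  Nat.le_zero.mp (wordLength_le S 1 (w := []) (fun x hx => by simp at hx) (by simp))

theorem wordLength_mul_le (hS : Subgroup.closure S = ⊤) (g h : G) :
    wordLength S (g * h) ≤ wordLength S g + wordLength S h := by
  obtain ⟨w₁, hl₁, hw₁, hp₁⟩ := exists_min_word S hS g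
  obtain ⟨w₂, hl₂, hw₂, hp₂⟩ := exists_min_word S hS h
  calc wordLength S (g * h) ≤ (w₁ ++ w₂).length :=
        wordLength_le S _ (isWord_append hw₁ hw₂) (by simp [hp₁, hp₂])
    _ = _ := by simp [hl₁, hl₂]

theorem wordLength_inv (hS : Subgroup.closure S = ⊤) (g : G) :
    wordLength S g⁻¹ = wordLength S g := by
  have key : ∀ x : G, wordLength S x⁻¹ ≤ wordLength S x := by
    intro x
    obtain ⟨w, hl, hw, hp⟩ := exists_min_word S hS x
    calc wordLength S x⁻¹ ≤ ((w.map (·⁻¹)).reverse).length :=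
          wordLength_le S _ (isWord_reverse_inv hw) (by rw [prod_reverse_inv, hp])
      _ = wordLength S x := by simp [hl]
  exact le_antisymm (key g) (by simpa using key g⁻¹)

theorem wordLength_eq_zero (hS : Subgroup.closure S = ⊤) {g : G}
    (h : wordLength S g = 0) : g = 1 := by
  obtain ⟨w, hl, _, hp⟩ := exists_min_word S hS g
  rw [h, List.length_eq_zero_iff] at hl
  rw [hl] at hp; simpa using hp.symm

end S

end HypAux

namespace HypAux

variable {G : Type} [Group G]

/-- Packaged data of a hyperbolic structure. -/
structure Geom (G : Type) [Group G] where
  S : Set G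
  fin : S.Finite
  clos : Subgroup.closure S = ⊤
  δ : ℤ
  δpos : 0 ≤ δ
  four : ∀ x y z w : G,
    (wordLength S (x⁻¹*y) : ℤ) + (wordLength S (z⁻¹*w) : ℤ) ≤
      max ((wordLength S (x⁻¹*z) : ℤ) + (wordLength S (y⁻¹*w) : ℤ))
          ((wordLength S (x⁻¹*w) : ℤ) + (wordLength S (y⁻¹*z) : ℤ)) + δ

theorem isHyperbolic_geom {G : Type} [Group G] (h : IsHyperbolicGroup G) :
    Nonempty (Geom G) := by
  obtain ⟨S, hfin, hclos, δ, hδ, hfour⟩ := h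
  refine ⟨⟨S, hfin, hclos, ⌈δ⌉, by positivity, ?_⟩⟩
  intro x y z w
  have h2 : wordDist S x y + wordDist S z w ≤
      max (wordDist S x z + wordDist S y w) (wordDist S x w + wordDist S y z) + (⌈δ⌉ : ℝ) :=
    (hfour x y z w).trans (by gcongr; exact Int.le_ceil δ)
  unfold wordDist at h2
  exact_mod_cast h2

variable (E : Geom G)

/-- integer-valued distance -/
noncomputable def Geom.D (x y : G) : ℤ := (wordLength E.S (x⁻¹ * y) : ℤ)

noncomputable def Geom.nd (x y : G) : ℕ := wordLength E.S (x⁻¹ * y)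

theorem Geom.D_eq_nd (x y : G) : E.D x y = (E.nd x y : ℤ) := rfl

theorem Geom.D_nonneg (x y : G) : 0 ≤ E.D x y := Int.ofNat_nonneg _

theorem Geom.D_self (x : G) : E.D x x = 0 := by
  simp [Geom.D, wordLength_one]

theorem Geom.D_symm (x y : G) : E.D x y = E.D y x := by
  unfold Geom.D
  congr 1
  rw [← wordLength_inv E.S E.clos (x⁻¹ * y)]
  simp

theorem Geom.D_triangle (x y z : G) : E.D x z ≤ E.D x y + E.D y z := by
  unfold Geom.D
  have := wordLength_mul_le E.S E.clos (x⁻¹ * y) (y⁻¹ * z)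
  simp only [mul_assoc] at this ⊢
  exact_mod_cast (by simpa [mul_assoc] using this)

theorem Geom.D_left_inv (a x y : G) : E.D (a * x) (a * y) = E.D x y := by
  unfold Geom.D
  congr 2
  group

theorem Geom.D_eq_zero {x y : G} (h : E.D x y = 0) : x = y := by
  unfold Geom.D at h
  have : wordLength E.S (x⁻¹ * y) = 0 := by exact_mod_cast h
  have := wordLength_eq_zero E.S E.clos this
  have : y = x := by
    have h2 : x * (x⁻¹ * y) = x * 1 := by rw [this]
    simpa [mul_assoc] using h2
  exact this.symm

theorem Geom.four_point (x y z w : G) :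
    E.D x y + E.D z w ≤ max (E.D x z + E.D y w) (E.D x w + E.D y z) + E.δ :=
  E.four x y z w

/-- doubled Gromov product -/
noncomputable def Geom.gp (p x y : G) : ℤ := E.D p x + E.D p y - E.D x y

theorem Geom.gp_nonneg (p x y : G) : 0 ≤ E.gp p x y := by
  have h := E.D_triangle x p y
  have h2 : E.D x p = E.D p x := E.D_symm x p
  unfold Geom.gp
  omega

theorem Geom.gp_le_left (p x y : G) : E.gp p x y ≤ 2 * E.D p x := by
  have h : E.D p y ≤ E.D p x + E.D x y := E.D_triangle p x y
  unfold Geom.gp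
  omega

/-- four-point condition in Gromov product form (all doubled) -/
theorem Geom.gp_four (p x y z : G) :
    min (E.gp p x y) (E.gp p y z) - E.δ ≤ E.gp p x z := by
  have h := E.four_point x z y p
  have e1 : E.D y p = E.D p y := E.D_symm y p
  have e2 : E.D x p = E.D p x := E.D_symm x p
  have e3 : E.D z p = E.D p z := E.D_symm z p
  have e4 : E.D z y = E.D y z := E.D_symm z y
  rcases le_total (E.D x y + E.D z p) (E.D x p + E.D z y) with hc | hc
  · have h' : E.D x z + E.D y p ≤ (E.D x p + E.D z y) + E.δ := by
      rw [max_eq_right hc] at h; exact h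
    have key : E.gp p y z - E.δ ≤ E.gp p x z := by
      simp only [Geom.gp]; omega
    exact le_trans (by omega) key
  · have h' : E.D x z + E.D y p ≤ (E.D x y + E.D z p) + E.δ := by
      rw [max_eq_left hc] at h; exact h
    have key : E.gp p x y - E.δ ≤ E.gp p x z := by
      simp only [Geom.gp]; omega
    exact le_trans (by omega) key

end HypAux

namespace HypAux

variable {G : Type} [Group G] (E : Geom G)

theorem Geom.nd_triangle (x y z : G) : E.nd x z ≤ E.nd x y + E.nd y z := by
  have := E.D_triangle x y z
  rw [E.D_eq_nd, E.D_eq_nd, E.D_eq_nd] at this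
  exact_mod_cast this

theorem Geom.nd_self (x : G) : E.nd x x = 0 := by
  have := E.D_self x; rw [E.D_eq_nd] at this; exact_mod_cast this

theorem Geom.nd_symm (x y : G) : E.nd x y = E.nd y x := by
  have := E.D_symm x y; rw [E.D_eq_nd, E.D_eq_nd] at this; exact_mod_cast this

theorem Geom.nd_left_inv (a x y : G) : E.nd (a * x) (a * y) = E.nd x y := by
  have := E.D_left_inv a x y; rw [E.D_eq_nd, E.D_eq_nd] at this; exact_mod_cast this

theorem Geom.nd_eq_zero {x y : G} (h : E.nd x y = 0) : x = y :=
  E.D_eq_zero (by rw [E.D_eq_nd, h]; rfl)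

theorem chain_exists (x y : G) : ∃ c : ℕ → G, c 0 = x ∧ c (E.nd x y) = y ∧
    ∀ i j, i ≤ j → j ≤ E.nd x y → E.nd (c i) (c j) = j - i := by
  obtain ⟨w, hl, hw, hp⟩ := exists_min_word E.S E.clos (x⁻¹ * y)
  set n := E.nd x y with hn
  have hln : w.length = n := hl
  refine ⟨fun i => x * (w.take i).prod, by simp, ?_, ?_⟩
  · show x * (w.take n).prod = y
    have : w.take n = w := by rw [← hln]; exact List.take_length
    rw [this, hp]; group
  · -- first, the upper bound
    have upper : ∀ i j, i ≤ j → j ≤ n → E.nd (x * (w.take i).prod) (x * (w.take j).prod) ≤ j - i := by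
      intro i j hij hjn
      set seg := (w.take j).drop i with hseg
      have hsplit : w.take i ++ seg = w.take j := by
        rw [hseg]
        have : (w.take j).take i = w.take i := by
          rw [List.take_take]; congr 1; omega
        conv_lhs => rw [← this]
        exact List.take_append_drop i (w.take j)
      have hprod : ((w.take i).prod)⁻¹ * (w.take j).prod = seg.prod := by
        rw [← hsplit, List.prod_append]; group
      have hsub : List.Sublist seg w :=
        ((List.drop_sublist i (w.take j)).trans (List.take_sublist j w))
      have hlen : seg.length = j - i := by
        rw [hseg, List.length_drop, List.length_take]
        omega
      have : E.nd (x * (w.take i).prod) (x * (w.take j).prod) =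
          wordLength E.S seg.prod := by
        rw [Geom.nd, ← hprod]; congr 1; group
      rw [this, ← hlen]
      exact wordLength_le E.S _ (isWord_sublist hsub hw) rfl
    intro i j hij hjn
    show E.nd (x * (w.take i).prod) (x * (w.take j).prod) = j - i
    have h1 : E.nd x (x * (w.take i).prod) ≤ i := by
      have := upper 0 i (Nat.zero_le i) (le_trans hij hjn)
      simpa using this
    have h2 : E.nd (x * (w.take j).prod) y ≤ n - j := by
      have := upper j n hjn (le_refl n)
      have hy : x * (w.take n).prod = y := by
        have : w.take n = w := by rw [← hln]; exact List.take_length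
        rw [this, hp]; group
      rwa [hy] at this
    have h3 : n ≤ i + (E.nd (x * (w.take i).prod) (x * (w.take j).prod)) + (n - j) := by
      calc n = E.nd x y := hn
      _ ≤ E.nd x (x * (w.take i).prod) + E.nd (x * (w.take i).prod) y :=
          E.nd_triangle _ _ _
      _ ≤ E.nd x (x * (w.take i).prod) + (E.nd (x * (w.take i).prod) (x * (w.take j).prod)
            + E.nd (x * (w.take j).prod) y) := by
          gcongr
          exact E.nd_triangle _ _ _
      _ ≤ i + (E.nd (x * (w.take i).prod) (x * (w.take j).prod) + (n - j)) := by gcongr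
      _ = _ := by ring
    have h4 := upper i j hij hjn
    omega

/-- chosen chain from x to y -/
noncomputable def Geom.ch (x y : G) : ℕ → G := Classical.choose (chain_exists E x y)

theorem Geom.ch_zero (x y : G) : E.ch x y 0 = x :=
  (Classical.choose_spec (chain_exists E x y)).1

theorem Geom.ch_last (x y : G) : E.ch x y (E.nd x y) = y :=
  (Classical.choose_spec (chain_exists E x y)).2.1

theorem Geom.ch_nd {x y : G} {i j : ℕ} (hij : i ≤ j) (hj : j ≤ E.nd x y) :
    E.nd (E.ch x y i) (E.ch x y j) = j - i :=
  (Classical.choose_spec (chain_exists E x y)).2.2 i j hij hj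

theorem Geom.ch_D {x y : G} {i j : ℕ} (hij : i ≤ j) (hj : j ≤ E.nd x y) :
    E.D (E.ch x y i) (E.ch x y j) = (j : ℤ) - (i : ℤ) := by
  rw [E.D_eq_nd, E.ch_nd hij hj]
  omega

theorem Geom.ch_D' {x y : G} {i j : ℕ} (hi : i ≤ E.nd x y) (hj : j ≤ E.nd x y) :
    E.D (E.ch x y i) (E.ch x y j) = |(j : ℤ) - (i : ℤ)| := by
  rcases le_total i j with h | h
  · rw [E.ch_D h hj, abs_of_nonneg (by omega : (0:ℤ) ≤ (j:ℤ) - i)]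
  · rw [E.D_symm, E.ch_D h hi, abs_of_nonpos (by omega : (j:ℤ) - (i:ℤ) ≤ 0)]
    omega

theorem Geom.ch_D_zero {x y : G} {i : ℕ} (hi : i ≤ E.nd x y) :
    E.D x (E.ch x y i) = (i : ℤ) := by
  have := E.ch_D (x := x) (y := y) (Nat.zero_le i) hi
  rwa [E.ch_zero, Nat.cast_zero, sub_zero] at this

theorem Geom.ch_D_last {x y : G} {i : ℕ} (hi : i ≤ E.nd x y) :
    E.D (E.ch x y i) y = (E.nd x y : ℤ) - i := by
  have := E.ch_D (x := x) (y := y) hi (le_refl _)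
  rwa [E.ch_last] at this

end HypAux

namespace HypAux

variable {G : Type} [Group G] (E : Geom G)

theorem alph_finite : {x : G | x ∈ E.S ∨ x⁻¹ ∈ E.S}.Finite := by
  have : {x : G | x ∈ E.S ∨ x⁻¹ ∈ E.S} ⊆ E.S ∪ ((fun a => a⁻¹) '' E.S) := by
    intro x hx
    rcases hx with h | h
    · exact Or.inl h
    · exact Or.inr ⟨x⁻¹, h, by simp⟩
  exact (E.fin.union (E.fin.image _)).subset this

theorem ball_finite (n : ℕ) : {g : G | wordLength E.S g ≤ n}.Finite := by
  induction n with
  | zero =>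
    apply Set.Finite.subset (Set.finite_singleton (1 : G))
    intro g hg
    simp only [Set.mem_setOf_eq, Nat.le_zero] at hg
    simp [wordLength_eq_zero E.S E.clos hg]
  | succ n ih =>
    apply Set.Finite.subset (Set.Finite.image2 (fun a b => a * b) ih
      ((alph_finite E).insert 1))
    intro g hg
    simp only [Set.mem_setOf_eq] at hg
    obtain ⟨w, hl, hw, hp⟩ := exists_min_word E.S E.clos g
    rw [Set.mem_image2]
    rcases List.eq_nil_or_concat w with rfl | ⟨L, b, rfl⟩
    · refine ⟨1, by simp [wordLength_one], 1, by simp, by rw [← hp]; simp⟩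
    · simp only [List.concat_eq_append] at hw hl hp
      have hb : b ∈ E.S ∨ b⁻¹ ∈ E.S := hw b (by simp)
      have hL : IsWord E.S L := isWord_sublist (List.sublist_append_left L [b]) hw
      have hLn : L.length ≤ n := by
        have h2 : (L ++ [b]).length = L.length + 1 := by simp
        omega
      refine ⟨L.prod, (wordLength_le E.S _ hL rfl).trans hLn, b, ?_, by rw [← hp]; simp⟩
      simp only [Set.mem_insert_iff, Set.mem_setOf_eq]
      exact Or.inr hb

theorem around_finite (x : G) (n : ℕ) : {g : G | E.nd x g ≤ n}.Finite := by
  apply Set.Finite.subset ((ball_finite E n).image (fun a => x * a))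
  intro g hg
  exact ⟨x⁻¹ * g, hg, by group⟩

theorem zpow_inj {g : G} (hg : ¬IsOfFinOrder g) : Function.Injective (fun n : ℤ => g ^ n) :=
  injective_zpow_iff_not_isOfFinOrder.mpr hg

/-- minimum distance from a point to the cyclic orbit is attained -/
theorem exists_min_orbit (g x : G) (hg : ¬IsOfFinOrder g) :
    ∃ k : ℤ, ∀ m : ℤ, E.nd x (g ^ k) ≤ E.nd x (g ^ m) := by
  set T : Set ℤ := {k : ℤ | E.nd x (g ^ k) ≤ E.nd x 1} with hT
  have hTfin : T.Finite := by
    have : T ⊆ (fun n : ℤ => g ^ n) ⁻¹' {y : G | E.nd x y ≤ E.nd x 1} := fun k hk => hk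
    exact Set.Finite.subset (Set.Finite.preimage
      (Set.injOn_of_injective (zpow_inj hg)) (around_finite E x _)) this
  have hT0 : (0 : ℤ) ∈ T := by simp [hT]
  obtain ⟨k, hkT, hkmin⟩ := Set.exists_min_image T (fun k => E.nd x (g ^ k)) hTfin ⟨0, hT0⟩
  refine ⟨k, fun m => ?_⟩
  by_cases hm : m ∈ T
  · exact hkmin m hm
  · simp only [hT, Set.mem_setOf_eq, not_le] at hm
    exact le_trans hkT (le_of_lt hm)

theorem pow_escape (v : G) (hv : ¬IsOfFinOrder v) (A : ℕ) :
    ∃ J : ℕ, ∀ j : ℕ, J ≤ j → A ≤ E.nd 1 (v ^ (j : ℤ)) := by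
  set T : Set ℕ := {j : ℕ | E.nd 1 (v ^ (j : ℤ)) < A} with hT
  have hTfin : T.Finite := by
    have hinj : Function.Injective (fun j : ℕ => v ^ (j : ℤ)) := by
      intro a b hab
      exact_mod_cast zpow_inj hv hab
    have hsub : T ⊆ (fun j : ℕ => v ^ (j : ℤ)) ⁻¹' {y : G | E.nd 1 y ≤ A} := by
      intro k hk
      have hk' : E.nd 1 (v ^ (k : ℤ)) < A := hk
      exact le_of_lt hk' 
    exact Set.Finite.subset (Set.Finite.preimage
      (Set.injOn_of_injective hinj) (around_finite E 1 _)) hsub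
  obtain ⟨J, hJ⟩ := hTfin.bddAbove
  refine ⟨J + 1, fun j hj => ?_⟩
  by_contra hcon
  push_neg at hcon
  have : j ∈ T := hcon
  have := hJ this
  omega

theorem finset_pow_escape (V : Finset G) (hv : ∀ v ∈ V, ¬IsOfFinOrder v) (A : ℕ) :
    ∃ j : ℕ, 1 ≤ j ∧ ∀ v ∈ V, A ≤ E.nd 1 (v ^ (j : ℤ)) := by
  classical
  choose J hJ using fun (v : V) => pow_escape E v.1 (hv v.1 v.2) A
  refine ⟨(V.attach.sup fun v => J v) + 1, by omega, fun v hv' => ?_⟩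
  refine hJ ⟨v, hv'⟩ _ ?_
  have h2 : J ⟨v, hv'⟩ ≤ V.attach.sup fun v => J v :=
    Finset.le_sup (f := fun v => J v) (Finset.mem_attach V ⟨v, hv'⟩)
  omega

end HypAux

namespace HypAux

variable {G : Type} [Group G] (E : Geom G)

/-- A discrete geodesic from `x` to `y`. -/
structure GChain (E : Geom G) (x y : G) where
  c : ℕ → G
  zero : c 0 = x
  last : c (E.nd x y) = y
  dist : ∀ i j, i ≤ j → j ≤ E.nd x y → E.nd (c i) (c j) = j - i

variable {E}

namespace GChain

noncomputable def choose (E : Geom G) (x y : G) : GChain E x y :=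
  ⟨E.ch x y, E.ch_zero x y, E.ch_last x y, fun _ _ hij hj => E.ch_nd hij hj⟩

variable {x y : G} (P : GChain E x y)

theorem D_pts {i j : ℕ} (hij : i ≤ j) (hj : j ≤ E.nd x y) :
    E.D (P.c i) (P.c j) = (j : ℤ) - i := by
  have := P.dist i j hij hj
  rw [E.D_eq_nd, this]; omega

theorem D_pts' {i j : ℕ} (hi : i ≤ E.nd x y) (hj : j ≤ E.nd x y) :
    E.D (P.c i) (P.c j) = |(j : ℤ) - i| := by
  rcases le_total i j with h | h
  · rw [P.D_pts h hj, abs_of_nonneg (by omega : (0:ℤ) ≤ (j:ℤ) - i)]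
  · rw [E.D_symm, P.D_pts h hi, abs_of_nonpos (by omega : (j:ℤ) - (i:ℤ) ≤ 0)]; omega

theorem D_zero {i : ℕ} (hi : i ≤ E.nd x y) : E.D x (P.c i) = (i : ℤ) := by
  have := P.D_pts (i := 0) (j := i) (Nat.zero_le i) hi
  rwa [P.zero, Nat.cast_zero, sub_zero] at this

theorem D_last {i : ℕ} (hi : i ≤ E.nd x y) : E.D (P.c i) y = (E.nd x y : ℤ) - i := by
  have := P.D_pts hi (le_refl _)
  rwa [P.last] at this

/-- left translate of a chain -/
noncomputable def transl (a : G) : GChain E (a * x) (a * y) where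
  c := fun i => a * P.c i
  zero := by show a * P.c 0 = a * x; rw [P.zero]
  last := by
    show a * P.c (E.nd (a * x) (a * y)) = a * y
    rw [E.nd_left_inv, P.last]
  dist := fun i j hij hj => by
    show E.nd (a * P.c i) (a * P.c j) = j - i
    rw [E.nd_left_inv]
    exact P.dist i j hij (by rwa [E.nd_left_inv a x y] at hj)

@[simp] theorem transl_c (a : G) (i : ℕ) : (P.transl a).c i = a * P.c i := rfl

end GChain

/-- `p` is (in doubled distance) within `K` of the image of chain `P`. -/
def NearPt {x y : G} (p : G) (P : GChain E x y) (K : ℤ) : Prop :=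
  ∃ j, j ≤ E.nd x y ∧ 2 * E.D p (P.c j) ≤ K

theorem NearPt.mono {x y : G} {p : G} {P : GChain E x y} {K K' : ℤ} (h : NearPt p P K)
    (hK : K ≤ K') : NearPt p P K' := by
  obtain ⟨j, hj, h2⟩ := h; exact ⟨j, hj, h2.trans hK⟩

/-- Lemma G : any point is near any chain, up to its Gromov product with the endpoints. -/
theorem near_chain {x y : G} (P : GChain E x y) (p : G) :
    ∃ j, j ≤ E.nd x y ∧ 2 * E.D p (P.c j) ≤ E.gp p x y + 2 * E.δ + 1 := by
  set n := E.nd x y with hn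
  set α := E.gp x p y with hα
  have hα0 : 0 ≤ α := E.gp_nonneg x p y
  have hcomm : E.gp x p y = E.gp x y p := by unfold Geom.gp; rw [E.D_symm p y]; ring
  have hα2 : α ≤ 2 * (n : ℤ) := by
    rw [hα, hcomm]
    have := E.gp_le_left x y p
    have hD : E.D x y = (n : ℤ) := E.D_eq_nd x y
    omega
  set i : ℕ := ((α + 1) / 2).toNat with hi
  have h2i : α ≤ 2 * (i : ℤ) ∧ 2 * (i : ℤ) ≤ α + 1 := by
    constructor <;> (rw [hi]; omega)
  have hin : i ≤ n := by
    have : (i : ℤ) ≤ n := by omega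
    exact_mod_cast this
  have hgpx : E.gp x (P.c i) y = 2 * (i : ℤ) := by
    have e1 := P.D_zero hin
    have e2 := P.D_last hin
    have e3 : E.D x y = (n : ℤ) := E.D_eq_nd x y
    unfold Geom.gp
    omega
  have hfour := E.gp_four x p y (P.c i)
  have hminval : min (E.gp x p y) (E.gp x y (P.c i)) = α := by
    have hc : E.gp x y (P.c i) = 2 * (i : ℤ) := by
      have hsymm : E.D y (P.c i) = E.D (P.c i) y := E.D_symm y (P.c i)
      have := hgpx
      unfold Geom.gp at this ⊢
      omega
    rw [hc, ← hα]
    exact min_eq_left (by omega)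
  rw [hminval] at hfour
  refine ⟨i, hin, ?_⟩
  have hexp : E.gp x p (P.c i) = E.D x p + (i : ℤ) - E.D p (P.c i) := by
    have e1 := P.D_zero hin
    have e2 : E.D p (P.c i) = E.D (P.c i) p := E.D_symm p (P.c i)
    unfold Geom.gp
    omega
  have hgoal : E.gp p x y = E.D x p + E.D p y - E.D x y := by
    have : E.D p x = E.D x p := E.D_symm p x
    unfold Geom.gp
    omega
  have hαexp : α = E.D x p + E.D x y - E.D p y := by rw [hα]; unfold Geom.gp; ring
  omega

/-- slim triangles -/
theorem slim_tri {x y z : G} (P : GChain E x y) (Q : GChain E x z) (R : GChain E z y)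
    {i : ℕ} (hi : i ≤ E.nd x y) :
    NearPt (P.c i) Q (3 * E.δ + 1) ∨ NearPt (P.c i) R (3 * E.δ + 1) := by
  set p := P.c i with hpdef
  have hgp0 : E.gp p x y = 0 := by
    have e1 : E.D p x = E.D x p := E.D_symm p x
    have e2 : E.D x p = (i : ℤ) := by rw [hpdef]; exact P.D_zero hi
    have e3 : E.D p y = (E.nd x y : ℤ) - i := by rw [hpdef]; exact P.D_last hi
    have e4 : E.D x y = (E.nd x y : ℤ) := E.D_eq_nd x y
    unfold Geom.gp
    omega
  have hfour := E.gp_four p x z y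
  rw [hgp0] at hfour
  rcases le_total (E.gp p x z) (E.gp p z y) with hc | hc
  · rw [min_eq_left hc] at hfour
    left
    obtain ⟨j, hj, h2⟩ := near_chain Q p
    exact ⟨j, hj, by omega⟩
  · rw [min_eq_right hc] at hfour
    right
    have hcomm : E.gp p z y = E.gp p y z := by
      have : E.D z y = E.D y z := E.D_symm z y
      unfold Geom.gp; omega
    obtain ⟨j', hj', h2'⟩ := near_chain R p
    exact ⟨j', hj', by rw [hcomm] at hfour; omega⟩

/-- slim quadrilaterals: a point on the side `x → y` is near one of the three other
sides `x → w`, `w → z`, `z → y`. -/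
theorem slim_quad {x y w z : G} (P : GChain E x y) (Q₁ : GChain E x w) (Q₂ : GChain E w z)
    (Q₃ : GChain E z y) {i : ℕ} (hi : i ≤ E.nd x y) :
    NearPt (P.c i) Q₁ (6 * E.δ + 2) ∨ NearPt (P.c i) Q₂ (6 * E.δ + 2) ∨
      NearPt (P.c i) Q₃ (6 * E.δ + 2) := by
  have hδ := E.δpos
  set A := GChain.choose E x z
  rcases slim_tri P A Q₃ hi with h | h
  · obtain ⟨j, hj, h2⟩ := h
    rcases slim_tri A Q₁ Q₂ hj with h' | h'
    · obtain ⟨j', hj', h2'⟩ := h'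
      left
      refine ⟨j', hj', ?_⟩
      have := E.D_triangle (P.c i) (A.c j) (Q₁.c j')
      omega
    · obtain ⟨j', hj', h2'⟩ := h'
      right; left
      refine ⟨j', hj', ?_⟩
      have := E.D_triangle (P.c i) (A.c j) (Q₂.c j')
      omega
  · right; right
    exact h.mono (by omega)

end HypAux

namespace HypAux

variable {G : Type} [Group G] {E : Geom G}

/-- displacement of the isometry `v` at the point `x` (an integer). -/
noncomputable def Geom.disp (E : Geom G) (v x : G) : ℤ := E.D x (v * x)

theorem Geom.disp_nonneg (E : Geom G) (v x : G) : 0 ≤ E.disp v x := E.D_nonneg _ _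

theorem Geom.disp_eq_conj (E : Geom G) (v x : G) :
    E.disp v x = E.D 1 (x⁻¹ * v * x) := by
  unfold Geom.disp Geom.D
  congr 2
  group

theorem Geom.disp_zpow (E : Geom G) (g x : G) (k : ℤ) :
    E.disp (g ^ k) x = E.D 1 ((x⁻¹ * g * x) ^ k) := by
  rw [E.disp_eq_conj]
  congr 2
  have : x⁻¹ * g * x = x⁻¹ * g * (x⁻¹)⁻¹ := by group
  rw [this, conj_zpow]
  group

/-- quasiconvexity of displacement along geodesics -/
theorem disp_quasi (v : G) {x y : G} (P : GChain E x y) {i : ℕ} (hi : i ≤ E.nd x y) :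
    E.disp v (P.c i) ≤ max (E.disp v x) (E.disp v y) + 6 * E.δ + 2 := by
  set n := E.nd x y with hn
  set p := P.c i with hp
  have hxp : E.D x p = (i : ℤ) := by rw [hp]; exact P.D_zero hi
  have hpy : E.D p y = (n : ℤ) - i := by rw [hp]; exact P.D_last hi
  have hF1 : E.disp v x = E.D x (v * x) := rfl
  have hF2 : E.disp v y = E.D y (v * y) := rfl
  have hF1n : E.D x (v*x) = (E.nd x (v*x) : ℤ) := E.D_eq_nd _ _
  have hF2n : E.D y (v*y) = (E.nd y (v*y) : ℤ) := E.D_eq_nd _ _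
  rcases slim_quad P (GChain.choose E x (v*x)) (P.transl v) (GChain.choose E (v*y) y)
      hi with h | h | h
  · -- near the side [x, vx]
    obtain ⟨j, hj, h2⟩ := h
    set Q := GChain.choose E x (v*x) with hQ
    set q := Q.c j with hq
    replace h2 : 2 * E.D p q ≤ 6 * E.δ + 2 := h2
    have e1 : E.D x q = (j : ℤ) := Q.D_zero hj
    have e2 : E.D q (v*x) = (E.nd x (v*x) : ℤ) - j := Q.D_last hj
    have t1 : E.D p (v*p) ≤ E.D p q + (E.D q (v*x) + E.D (v*x) (v*p)) := by
      calc E.D p (v*p) ≤ E.D p q + E.D q (v*p) := E.D_triangle _ _ _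
      _ ≤ E.D p q + (E.D q (v*x) + E.D (v*x) (v*p)) := by
          gcongr; exact E.D_triangle _ _ _
    have t2 : E.D (v*x) (v*p) = (i : ℤ) := by rw [E.D_left_inv]; exact hxp
    have t3 : E.D x p ≤ E.D x q + E.D q p := E.D_triangle _ _ _
    have t4 : E.D q p = E.D p q := E.D_symm _ _
    have hgoal : E.disp v p ≤ E.disp v x + 6 * E.δ + 2 := by
      unfold Geom.disp
      omega
    exact hgoal.trans (by have := le_max_left (E.disp v x) (E.disp v y); omega)
  · -- near the translated side [vx, vy]
    obtain ⟨j, hj, h2⟩ := h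
    have hjn : j ≤ n := by rwa [E.nd_left_inv v x y] at hj
    set q := v * P.c j with hq
    have hq' : (P.transl v).c j = q := rfl
    rw [hq'] at h2
    replace h2 : 2 * E.D p q ≤ 6 * E.δ + 2 := h2
    have t1 : E.D p (v*p) ≤ E.D p q + E.D q (v*p) := E.D_triangle _ _ _
    have t2 : E.D q (v*p) = |(i : ℤ) - j| := by
      rw [hq, E.D_left_inv, hp]
      have := P.D_pts' hjn hi
      rw [this]
    have t3 : E.D x q ≤ E.D x (v*x) + E.D (v*x) q := E.D_triangle _ _ _
    have t4 : E.D (v*x) q = (j : ℤ) := by rw [hq, E.D_left_inv]; exact P.D_zero hjn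
    have t5 : E.D x p ≤ E.D x q + E.D q p := E.D_triangle _ _ _
    have t6 : E.D q p = E.D p q := E.D_symm _ _
    have t7 : E.D (v*x) q ≤ E.D (v*x) x + (E.D x p + E.D p q) := by
      calc E.D (v*x) q ≤ E.D (v*x) x + E.D x q := E.D_triangle _ _ _
      _ ≤ E.D (v*x) x + (E.D x p + E.D p q) := by
          gcongr
          exact E.D_triangle _ _ _
    have t8 : E.D (v*x) x = E.D x (v*x) := E.D_symm _ _
    have habs : |(i:ℤ) - j| ≤ E.D x (v*x) + E.D p q := by
      rcases abs_cases ((i:ℤ) - j) with ⟨he, _⟩ | ⟨he, _⟩ <;> omega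
    have hgoal : E.disp v p ≤ E.disp v x + 6 * E.δ + 2 := by
      unfold Geom.disp
      omega
    exact hgoal.trans (by have := le_max_left (E.disp v x) (E.disp v y); omega)
  · -- near the side [vy, y]
    obtain ⟨j, hj, h2⟩ := h
    set Q := GChain.choose E (v*y) y with hQ
    set q := Q.c j with hq
    replace h2 : 2 * E.D p q ≤ 6 * E.δ + 2 := h2
    have e1 : E.D (v*y) q = (j : ℤ) := Q.D_zero hj
    have e2 : E.D q y = (E.nd (v*y) y : ℤ) - j := Q.D_last hj
    have e3 : E.nd (v*y) y = E.nd y (v*y) := E.nd_symm _ _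
    have t1 : E.D p (v*p) ≤ E.D p q + (E.D q (v*y) + E.D (v*y) (v*p)) := by
      calc E.D p (v*p) ≤ E.D p q + E.D q (v*p) := E.D_triangle _ _ _
      _ ≤ E.D p q + (E.D q (v*y) + E.D (v*y) (v*p)) := by
          gcongr; exact E.D_triangle _ _ _
    have t2 : E.D (v*y) (v*p) = E.D y p := E.D_left_inv _ _ _
    have t2' : E.D y p = (n : ℤ) - i := by rw [E.D_symm]; exact hpy
    have t3 : E.D q (v*y) = (j : ℤ) := by rw [E.D_symm]; exact e1
    have t5 : E.D p y ≤ E.D p q + E.D q y := E.D_triangle _ _ _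
    have hgoal : E.disp v p ≤ E.disp v y + 6 * E.δ + 2 := by
      unfold Geom.disp
      omega
    exact hgoal.trans (by have := le_max_right (E.disp v x) (E.disp v y); omega)

end HypAux

namespace HypAux

variable {G : Type} [Group G] {E : Geom G}

theorem Geom.nd_one (E : Geom G) (u : G) : E.nd 1 u = wordLength E.S u := by
  unfold Geom.nd; rw [inv_one, one_mul]

theorem nd_one_pow_le (v : G) (j : ℕ) : E.nd 1 (v ^ j) ≤ j * E.nd 1 v := by
  induction j with
  | zero => simp [pow_zero, E.nd_one, wordLength_one]
  | succ j ih =>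
    rw [pow_succ, E.nd_one]
    calc wordLength E.S (v ^ j * v) ≤ wordLength E.S (v ^ j) + wordLength E.S v :=
      wordLength_mul_le E.S E.clos _ _
    _ ≤ j * E.nd 1 v + E.nd 1 v := by
        rw [← E.nd_one, ← E.nd_one]; exact add_le_add ih (le_refl _)
    _ = (j + 1) * E.nd 1 v := by ring

theorem nd_one_zpow_le (v : G) (j : ℕ) : E.nd 1 (v ^ (j : ℤ)) ≤ j * E.nd 1 v := by
  rw [zpow_natCast]; exact nd_one_pow_le v j

theorem conj_not_finOrder {g : G} (hg : ¬IsOfFinOrder g) (u : G) :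
    ¬IsOfFinOrder (u⁻¹ * g * u) := by
  intro hv
  apply hg
  rw [isOfFinOrder_iff_pow_eq_one] at hv ⊢
  obtain ⟨m, hm, hvm⟩ := hv
  refine ⟨m, hm, ?_⟩
  have hgconj : g = u * (u⁻¹ * g * u) * u⁻¹ := by group
  rw [hgconj, conj_pow, hvm, mul_one, mul_inv_cancel]

theorem set_pow_escape (V : Set G) (hfin : V.Finite) (hv : ∀ v ∈ V, ¬IsOfFinOrder v) (A : ℕ) :
    ∃ j : ℕ, 1 ≤ j ∧ ∀ v ∈ V, A ≤ E.nd 1 (v ^ (j : ℤ)) := by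
  obtain ⟨j, h1, h2⟩ := finset_pow_escape E hfin.toFinset
    (fun v hv' => hv v (hfin.mem_toFinset.mp hv')) A
  exact ⟨j, h1, fun v hv' => h2 v (hfin.mem_toFinset.mpr hv')⟩

theorem zpow_commute (g : G) (a b : ℤ) : g ^ a * g ^ b = g ^ b * g ^ a := by
  rw [← zpow_add, ← zpow_add, add_comm]

/-- Main geometric lemma: every point whose `g`-displacement is at most `|g|`
lies at uniformly bounded distance from the orbit `{gᵏ}`. -/
theorem low_near_orbit (g : G) (hg : ¬IsOfFinOrder g) :
    ∃ R : ℕ, ∀ x : G, E.disp g x ≤ E.disp g 1 → ∃ k : ℤ, E.nd (g ^ k) x ≤ R := by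
  classical
  -- constants
  set δn : ℕ := E.δ.toNat with hδn
  have hδcast : (δn : ℤ) = E.δ := Int.toNat_of_nonneg E.δpos
  set κ : ℕ := 6 * δn + 2 with hκ
  have hκcast : (κ : ℤ) = 6 * E.δ + 2 := by push_cast; omega
  set Dg : ℕ := E.nd 1 g with hDg
  set T8 : ℕ := Dg + κ with hT8
  set A0 : ℕ := 4 * κ + 10 with hA0
  set V : Set G := {v : G | E.nd 1 v ≤ T8 ∧ ∃ u : G, u⁻¹ * g * u = v} with hV
  have hVfin : V.Finite := (around_finite E 1 T8).subset (fun v hv => hv.1)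
  have hVinf : ∀ v ∈ V, ¬IsOfFinOrder v := by
    rintro v ⟨-, u, rfl⟩
    exact conj_not_finOrder hg u
  obtain ⟨j, hj1, hjA⟩ := set_pow_escape V hVfin hVinf A0
  set B0 : ℕ := j * T8 with hB0
  set margin : ℕ := 3 * B0 + κ + 2 with hmargin
  set R : ℕ := 2 * margin + 2 with hR
  refine ⟨R, ?_⟩
  intro x₀ hx₀
  -- `disp g 1 = Dg`
  have hdisp1 : E.disp g 1 = (Dg : ℤ) := by
    unfold Geom.disp
    rw [mul_one, E.D_eq_nd]
  -- normalize x₀ to its closest orbit representative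
  obtain ⟨k₀, hk₀⟩ := exists_min_orbit E g x₀ hg
  set x : G := (g ^ k₀)⁻¹ * x₀ with hx
  have hxeq : g ^ k₀ * x = x₀ := by rw [hx]; group
  have hnd0 : E.nd 1 x = E.nd (g ^ k₀) x₀ := by
    have := E.nd_left_inv (g ^ k₀)⁻¹ (g ^ k₀) x₀
    simpa [hx] using this
  have hminx : ∀ m : ℤ, E.nd 1 x ≤ E.nd (g ^ m) x := by
    intro m
    have h1 : E.nd (g ^ m) x = E.nd (g ^ (k₀ + m)) x₀ := by
      have := E.nd_left_inv (g ^ k₀) (g ^ m) x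
      rw [← this, ← zpow_add, hxeq]
    rw [h1, hnd0]
    have h2 := hk₀ (k₀ + m)
    have h3 : E.nd x₀ (g ^ k₀) = E.nd (g ^ k₀) x₀ := E.nd_symm _ _
    have h4 : E.nd x₀ (g ^ (k₀ + m)) = E.nd (g ^ (k₀ + m)) x₀ := E.nd_symm _ _
    omega
  have hlow : E.disp g x ≤ (Dg : ℤ) := by
    have : E.disp g x = E.disp g x₀ := by
      unfold Geom.disp
      have hc : g * x = (g ^ k₀)⁻¹ * (g * x₀) := by
        rw [hx]
        have : g * (g ^ k₀)⁻¹ = (g ^ k₀)⁻¹ * g := by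
          have := zpow_commute g 1 (-k₀)
          simpa [zpow_neg] using this
        rw [← mul_assoc, this, mul_assoc]
      rw [hc, hx, E.D_left_inv]
    rw [this, ← hdisp1]; exact hx₀
  set n : ℕ := E.nd 1 x with hn
  by_cases hnR : n ≤ R
  · exact ⟨k₀, by rw [← hnd0]; exact hnR⟩
  exfalso
  push_neg at hnR
  -- the geodesic to x
  set P : GChain E 1 x := GChain.choose E 1 x with hP
  -- conjugate data along the chain
  have hVmem : ∀ i, i ≤ n → ((P.c i)⁻¹ * g * (P.c i)) ∈ V := by
    intro i hi
    constructor
    · have hq := disp_quasi g P hi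
      have e1 : E.D 1 (((P.c i))⁻¹ * g * (P.c i)) = E.disp g (P.c i) :=
        (E.disp_eq_conj g (P.c i)).symm
      have e2 : E.D 1 (((P.c i))⁻¹ * g * (P.c i)) = (E.nd 1 (((P.c i))⁻¹ * g * (P.c i)) : ℤ) :=
        E.D_eq_nd _ _
      have e3 : max (E.disp g 1) (E.disp g x) ≤ (Dg : ℤ) := by
        rw [hdisp1]; exact max_le (le_refl _) hlow
      have : (E.nd 1 (((P.c i))⁻¹ * g * (P.c i)) : ℤ) ≤ (T8 : ℤ) := by
        push_cast [hT8]
        omega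
      exact_mod_cast this
    · exact ⟨P.c i, rfl⟩
  set v' : G := g ^ (j : ℤ) with hv'
  have hbounds : ∀ i, i ≤ n → (A0 : ℤ) ≤ E.disp v' (P.c i) ∧ E.disp v' (P.c i) ≤ (B0 : ℤ) := by
    intro i hi
    have hz := E.disp_zpow g (P.c i) (j : ℤ)
    have hnd : E.disp v' (P.c i) = (E.nd 1 ((((P.c i))⁻¹ * g * (P.c i)) ^ (j:ℤ)) : ℤ) := by
      rw [hv', hz, E.D_eq_nd]
    constructor
    · rw [hnd]
      exact_mod_cast hjA _ (hVmem i hi)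
    · rw [hnd]
      have h1 := nd_one_zpow_le (E := E) (((P.c i))⁻¹ * g * (P.c i)) j
      have h2 : E.nd 1 (((P.c i))⁻¹ * g * (P.c i)) ≤ T8 := (hVmem i hi).1
      have : E.nd 1 ((((P.c i))⁻¹ * g * (P.c i)) ^ (j:ℤ)) ≤ j * T8 := by
        calc E.nd 1 ((((P.c i))⁻¹ * g * (P.c i)) ^ (j:ℤ)) ≤ j * E.nd 1 (((P.c i))⁻¹ * g * (P.c i)) := h1
        _ ≤ j * T8 := by exact Nat.mul_le_mul_left j h2
      exact_mod_cast this
  -- projection of the translated chain point at index t := margin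
  set t : ℕ := margin with ht
  have htn : t ≤ n := by omega
  have htop : E.nd (v' * 1) (v' * x) = n := by rw [E.nd_left_inv]
  set pt : G := v' * P.c t with hpt
  have hpt' : (P.transl v').c t = pt := rfl
  have hDptPt : E.D pt (P.c t) ≤ (B0 : ℤ) := by
    have := (hbounds t htn).2
    unfold Geom.disp at this
    rw [hpt, E.D_symm]
    exact this
  have hquad := slim_quad (P.transl v') (GChain.choose E (v' * 1) 1) P
    (GChain.choose E x (v' * x)) (i := t) (by rw [htop]; exact htn)
  rw [hpt'] at hquad
  have hD1Pt : E.D 1 (P.c t) = (t : ℤ) := P.D_zero htn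
  have hDPtx : E.D (P.c t) x = (n : ℤ) - t := P.D_last htn
  -- exclude the two short sides
  rcases hquad with h | h | h
  · -- near the side [v'·1, 1] : impossible since t is large
    obtain ⟨s', hs', h2⟩ := h
    set Q := GChain.choose E (v' * 1) 1 with hQ
    replace h2 : 2 * E.D pt (Q.c s') ≤ 6 * E.δ + 2 := h2
    have hm1 : (E.nd (v' * 1) 1 : ℤ) ≤ (B0 : ℤ) := by
      have h0 := (hbounds 0 (Nat.zero_le n)).2
      have hP0 : P.c 0 = 1 := P.zero
      unfold Geom.disp at h0
      rw [hP0, E.D_eq_nd] at h0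
      rw [E.nd_symm]
      exact h0
    have e1 : E.D (v' * 1) (Q.c s') = (s' : ℤ) := Q.D_zero hs'
    have e2 : (s' : ℤ) ≤ (E.nd (v' * 1) 1 : ℤ) := by exact_mod_cast hs'
    have t1 : E.D 1 (Q.c s') ≤ E.D 1 (v' * 1) + E.D (v' * 1) (Q.c s') := E.D_triangle _ _ _
    have t2 : E.D 1 (v' * 1) = E.nd (v' * 1) 1 := by rw [E.D_eq_nd, E.nd_symm]
    have t3 : E.D 1 (P.c t) ≤ E.D 1 pt + E.D pt (P.c t) := E.D_triangle _ _ _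
    have t4 : E.D 1 pt ≤ E.D 1 (Q.c s') + E.D (Q.c s') pt := E.D_triangle _ _ _
    have t5 : E.D (Q.c s') pt = E.D pt (Q.c s') := E.D_symm _ _
    have hδc : (κ : ℤ) = 6 * E.δ + 2 := hκcast
    omega
  · -- near the base chain P : the real case
    obtain ⟨s, hs, h2⟩ := h
    replace h2 : 2 * E.D pt (P.c s) ≤ 6 * E.δ + 2 := h2
    -- index separation
    have hsep : (A0 : ℤ) - κ ≤ |(s : ℤ) - t| := by
      have hlo := (hbounds t htn).1
      have habs : E.D (P.c t) (P.c s) = |(s : ℤ) - t| := P.D_pts' htn hs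
      have t1 : E.D (P.c t) pt ≤ E.D (P.c t) (P.c s) + E.D (P.c s) pt := E.D_triangle _ _ _
      have t2 : E.D (P.c s) pt = E.D pt (P.c s) := E.D_symm _ _
      have t3 : E.D (P.c t) pt = E.disp v' (P.c t) := by
        unfold Geom.disp; rw [hpt]
      have hδc : (κ : ℤ) = 6 * E.δ + 2 := hκcast
      omega
    rcases abs_cases ((s : ℤ) - t) with ⟨he, hsign⟩ | ⟨he, hsign⟩
    · -- s ≥ t : the power g^j is closer to x than 1 is
      have hkey : 2 * E.D (g ^ (j:ℤ)) x < 2 * (n : ℤ) := by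
        have t1 : E.D (g ^ (j:ℤ)) x ≤ E.D (g ^ (j:ℤ)) pt + (E.D pt (P.c s) + E.D (P.c s) x) := by
          calc E.D (g ^ (j:ℤ)) x ≤ E.D (g ^ (j:ℤ)) pt + E.D pt x := E.D_triangle _ _ _
          _ ≤ E.D (g ^ (j:ℤ)) pt + (E.D pt (P.c s) + E.D (P.c s) x) := by
              gcongr; exact E.D_triangle _ _ _
        have t2 : E.D (g ^ (j:ℤ)) pt = (t : ℤ) := by
          rw [hpt, hv']
          have : E.D (g ^ (j:ℤ)) (g ^ (j:ℤ) * P.c t) = E.D (g ^ (j:ℤ) * 1) (g ^ (j:ℤ) * P.c t) := by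
            rw [mul_one]
          rw [this, E.D_left_inv, ← hD1Pt]
        have t3 : E.D (P.c s) x = (n : ℤ) - s := P.D_last hs
        have hδc : (κ : ℤ) = 6 * E.δ + 2 := hκcast
        omega
      have hcon := hminx (j : ℤ)
      have hc1 : E.D (g ^ (j:ℤ)) x = (E.nd (g ^ (j:ℤ)) x : ℤ) := E.D_eq_nd _ _
      have hc2 : (n:ℤ) ≤ (E.nd (g ^ (j:ℤ)) x : ℤ) := by exact_mod_cast hcon
      omega
    · -- s < t : the power g^{-j} is closer
      have hkey : 2 * E.D (g ^ (-(j:ℤ))) x < 2 * (n : ℤ) := by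
        have e0 : E.D (g ^ (-(j:ℤ))) x = E.D 1 (v' * x) := by
          have : E.D (g ^ (-(j:ℤ))) x = E.D (v' * g ^ (-(j:ℤ))) (v' * x) := (E.D_left_inv _ _ _).symm
          rw [this, hv', ← zpow_add]
          norm_num
        have t1 : E.D 1 (v' * x) ≤ E.D 1 (P.c s) + (E.D (P.c s) pt + E.D pt (v' * x)) := by
          calc E.D 1 (v' * x) ≤ E.D 1 (P.c s) + E.D (P.c s) (v' * x) := E.D_triangle _ _ _
          _ ≤ E.D 1 (P.c s) + (E.D (P.c s) pt + E.D pt (v' * x)) := by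
              gcongr; exact E.D_triangle _ _ _
        have t2 : E.D 1 (P.c s) = (s : ℤ) := P.D_zero hs
        have t3 : E.D pt (v' * x) = (n : ℤ) - t := by
          rw [hpt, E.D_left_inv, ← hDPtx]
        have t4 : E.D (P.c s) pt = E.D pt (P.c s) := E.D_symm _ _
        have hδc : (κ : ℤ) = 6 * E.δ + 2 := hκcast
        omega
      have hcon := hminx (-(j : ℤ))
      have hc1 : E.D (g ^ (-(j:ℤ))) x = (E.nd (g ^ (-(j:ℤ))) x : ℤ) := E.D_eq_nd _ _
      have hc2 : (n:ℤ) ≤ (E.nd (g ^ (-(j:ℤ))) x : ℤ) := by exact_mod_cast hcon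
      omega
  · -- near the side [x, v'x] : impossible since t is far from n
    obtain ⟨s', hs', h2⟩ := h
    set Q := GChain.choose E x (v' * x) with hQ
    replace h2 : 2 * E.D pt (Q.c s') ≤ 6 * E.δ + 2 := h2
    have hm3 : (E.nd x (v' * x) : ℤ) ≤ (B0 : ℤ) := by
      have h0 := (hbounds n (le_refl n)).2
      have hPn : P.c n = x := P.last
      unfold Geom.disp at h0
      rw [hPn, E.D_eq_nd] at h0
      exact h0
    have e2 : E.D (Q.c s') (v' * x) = (E.nd x (v' * x) : ℤ) - s' := Q.D_last hs'
    have t1 : E.D pt (v' * x) = (n : ℤ) - t := by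
      rw [hpt, E.D_left_inv, ← hDPtx]
    have t2 : E.D pt (v' * x) ≤ E.D pt (Q.c s') + E.D (Q.c s') (v' * x) := E.D_triangle _ _ _
    have t3 : (0:ℤ) ≤ (s' : ℤ) := by positivity
    have hδc : (κ : ℤ) = 6 * E.δ + 2 := hκcast
    omega

end HypAux

namespace HypAux

variable {G : Type} [Group G]

theorem infinite_zpowers_not_finOrder {g : G} (hg : Infinite (Subgroup.zpowers g)) :
    ¬IsOfFinOrder g := by
  rw [← infinite_zpowers]
  exact Set.infinite_coe_iff.mp hg

theorem index_lemma (E : Geom G) (g : G) (hg : ¬IsOfFinOrder g) (K : Subgroup G)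
    (hgK : g ∈ K) (hK : ∀ h ∈ K, E.disp g h ≤ E.disp g 1) :
    (Subgroup.zpowers g).relIndex K ≠ 0 := by
  classical
  obtain ⟨R, hR⟩ := low_near_orbit (E := E) g hg
  set H : Subgroup K := (Subgroup.zpowers g).subgroupOf K with hH
  have : Finite (K ⧸ H) := by
    set T : Set G := {b : G | E.nd 1 b ≤ R ∧ b ∈ K} with hT
    have hTfin : T.Finite := (around_finite E 1 R).subset (fun b hb => hb.1)
    have : Finite T := hTfin.to_subtype
    refine Finite.of_surjective (f := fun b : T => (QuotientGroup.mk ⟨b.1, b.2.2⟩ : K ⧸ H)) ?_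
    intro q
    induction q using QuotientGroup.induction_on with
    | H h =>
      obtain ⟨k, hk⟩ := hR (h : G)⁻¹ (hK _ (inv_mem h.2))
      set b : G := (h : G) * g ^ k with hb
      have hbR : E.nd 1 b ≤ R := by
        have h1 : E.nd (g ^ k) (↑h)⁻¹ = E.nd 1 ((g ^ k)⁻¹ * (↑h)⁻¹) := by
          have := E.nd_left_inv (g ^ k)⁻¹ (g ^ k) (↑h)⁻¹
          rw [← this]; congr 1; group
        have h2 : E.nd 1 ((g ^ k)⁻¹ * (↑h)⁻¹) = E.nd 1 b := by
          unfold Geom.nd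
          rw [inv_one, one_mul, one_mul]
          rw [← wordLength_inv E.S E.clos]
          congr 1
          rw [hb]; group
        rw [← h2, ← h1]; exact hk
      have hbK : b ∈ K := mul_mem h.2 (zpow_mem hgK k)
      refine ⟨⟨b, hbR, hbK⟩, ?_⟩
      have : (QuotientGroup.mk (⟨b, hbK⟩ : K) : K ⧸ H) = QuotientGroup.mk h := by
        rw [QuotientGroup.eq]
        have hmem : ((⟨b, hbK⟩ : K)⁻¹ * h : K) ∈ H := by
          rw [hH, Subgroup.mem_subgroupOf]
          have hcoe : (((⟨b, hbK⟩ : K)⁻¹ * h : K) : G) = b⁻¹ * (h : G) := rfl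
          rw [hcoe, hb]
          have he : ((h : G) * g ^ k)⁻¹ * (h : G) = g ^ (-k) := by group
          rw [he]
          exact Subgroup.zpow_mem_zpowers g (-k)
        exact hmem
      exact this
  have hne : H.index ≠ 0 := Subgroup.index_ne_zero_of_finite
  exact hne

theorem centralizer_case (E : Geom G) (g : G) (hg : Infinite (Subgroup.zpowers g)) :
    (Subgroup.zpowers g).relIndex (Subgroup.centralizer (Subgroup.zpowers g : Set G)) ≠ 0 := by
  have hord := infinite_zpowers_not_finOrder hg
  apply index_lemma E g hord
  · rw [Subgroup.mem_centralizer_iff]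
    rintro h ⟨m, rfl⟩
    show g ^ m * g = g * g ^ m
    simpa using zpow_commute g m 1
  · intro h hh
    rw [Subgroup.mem_centralizer_iff] at hh
    have hcomm : g * h = h * g := hh g (Subgroup.mem_zpowers g)
    have : E.disp g h = E.disp g 1 := by
      unfold Geom.disp Geom.D
      have e1 : h⁻¹ * (g * h) = g := by
        rw [hcomm]; group
      have e2 : (1:G)⁻¹ * (g * 1) = g := by group
      rw [e1, e2]
    omega

theorem normalizer_case (E : Geom G) (g : G) (hg : Infinite (Subgroup.zpowers g)) :
    (Subgroup.zpowers g).relIndex (Subgroup.normalizer (Subgroup.zpowers g : Set G)) ≠ 0 := by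
  have hord := infinite_zpowers_not_finOrder hg
  have hinj := zpow_inj hord
  apply index_lemma E g hord
  · exact Subgroup.le_normalizer (Subgroup.mem_zpowers g)
  · intro h hh
    rw [Subgroup.mem_normalizer_iff] at hh
    -- h g h⁻¹ = g ^ m , h⁻¹ g h = g ^ m' with m * m' = 1
    have h1 : h * g * h⁻¹ ∈ Subgroup.zpowers g := (hh g).mp (Subgroup.mem_zpowers g)
    obtain ⟨m, hm⟩ := Subgroup.mem_zpowers_iff.mp h1
    have h2 : h⁻¹ * g * h ∈ Subgroup.zpowers g := by
      have := (hh (h⁻¹ * g * h)).mpr (by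
        have : h * (h⁻¹ * g * h) * h⁻¹ = g := by group
        rw [this]; exact Subgroup.mem_zpowers g)
      exact this
    obtain ⟨m', hm'⟩ := Subgroup.mem_zpowers_iff.mp h2
    have hmm' : g ^ (m' * m) = g ^ (1 : ℤ) := by
      have e1 : g = h * (h⁻¹ * g * h) * h⁻¹ := by group
      have e2 : h * (g ^ m') * h⁻¹ = (h * g * h⁻¹) ^ m' := by
        rw [conj_zpow]
      calc g ^ (m' * m) = (g ^ m') ^ m := by rw [← zpow_mul, mul_comm m' m, zpow_mul]
      _ = (h⁻¹ * g * h) ^ m := by rw [hm']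
      _ = h⁻¹ * g ^ m * h := by
          have : h⁻¹ * g * h = h⁻¹ * g * (h⁻¹)⁻¹ := by group
          rw [this, conj_zpow]; group
      _ = h⁻¹ * (h * g * h⁻¹) * h := by rw [hm]
      _ = g := by group
      _ = g ^ (1:ℤ) := by rw [zpow_one]
    have hprod : m' * m = 1 := hinj hmm'
    have hdisp : E.disp g h = (E.nd 1 (g ^ m') : ℤ) := by
      unfold Geom.disp Geom.D Geom.nd
      rw [inv_one, one_mul, hm']
      congr 2
      group
    have hdisp1 : E.disp g 1 = (E.nd 1 g : ℤ) := by
      unfold Geom.disp Geom.D Geom.nd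
      rw [inv_one, one_mul, mul_one, one_mul]
    rcases Int.mul_eq_one_iff_eq_one_or_neg_one.mp hprod with ⟨hm1, -⟩ | ⟨hm1, -⟩
    · rw [hdisp, hdisp1, hm1, zpow_one]
    · rw [hdisp, hdisp1, hm1]
      have : g ^ (-1 : ℤ) = g⁻¹ := by rw [zpow_neg_one]
      rw [this]
      unfold Geom.nd
      rw [inv_one, one_mul, one_mul, wordLength_inv E.S E.clos]

end HypAux

namespace HypAux

variable {G : Type} [Group G]

theorem no_zn (E : Geom G) (n : ℕ) (hn : 2 ≤ n) (H : Subgroup G) :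
    ¬ Nonempty (H ≃* Multiplicative (Fin n → ℤ)) := by
  rintro ⟨φ⟩
  set ψ := φ.symm with hψ
  set i0 : Fin n := ⟨0, by omega⟩ with hi0
  set i1 : Fin n := ⟨1, by omega⟩ with hi1
  have hi01 : i0 ≠ i1 := by
    intro h
    have : (0 : ℕ) = 1 := congrArg Fin.val h
    omega
  set X : Multiplicative (Fin n → ℤ) := Multiplicative.ofAdd (Pi.single i0 1) with hX
  set Y : Multiplicative (Fin n → ℤ) := Multiplicative.ofAdd (Pi.single i1 1) with hY
  set a' : H := ψ X with ha'
  set b' : H := ψ Y with hb'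
  set a : G := (a' : G) with ha
  set b : G := (b' : G) with hb
  -- commutation
  have hcomm' : a' * b' = b' * a' := by
    rw [ha', hb', ← map_mul, mul_comm X Y, map_mul]
  have hcomm : a * b = b * a := by
    rw [ha, hb, ← Subgroup.coe_mul, ← Subgroup.coe_mul, hcomm']
  -- a has infinite order
  have hXk : ∀ k : ℤ, φ (a' ^ k) = Multiplicative.ofAdd (k • Pi.single i0 1) := by
    intro k
    rw [ha', map_zpow, MulEquiv.apply_symm_apply]
    rw [hX]
    rfl
  have hYk : ∀ k : ℤ, φ (b' ^ k) = Multiplicative.ofAdd (k • Pi.single i1 1) := by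
    intro k
    rw [hb', map_zpow, MulEquiv.apply_symm_apply]
    rw [hY]
    rfl
  have hord : ¬IsOfFinOrder a := by
    rw [isOfFinOrder_iff_pow_eq_one]
    rintro ⟨m, hm, hma⟩
    have hma' : a' ^ m = 1 := by
      have : ((a' ^ m : H) : G) = ((1 : H) : G) := by
        rw [Subgroup.coe_pow]
        simpa using hma
      exact_mod_cast Subtype.ext (by exact_mod_cast this)
    have := hXk (m : ℤ)
    rw [zpow_natCast, hma', map_one] at this
    have h0 : ((m : ℤ) • Pi.single i0 1 : Fin n → ℤ) = 0 := by
      have := this.symm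
      have h2 : Multiplicative.toAdd (Multiplicative.ofAdd ((m:ℤ) • Pi.single i0 1)) =
          Multiplicative.toAdd (1 : Multiplicative (Fin n → ℤ)) := by rw [← this]
      simpa using h2
    have := congrFun h0 i0
    simp [Pi.single_eq_same] at this
    omega
  have hab : Commute a b := hcomm
  have hinf : Infinite (Subgroup.zpowers a) := by
    have h1 : (Subgroup.zpowers a : Set G).Infinite := infinite_zpowers.mpr hord
    exact Set.infinite_coe_iff.mpr h1
  -- b powers lie in the centralizer of zpowers a
  have hbmem : ∀ m : ℤ, b ^ m ∈ Subgroup.centralizer (Subgroup.zpowers a : Set G) := by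
    intro m
    rw [Subgroup.mem_centralizer_iff]
    rintro u ⟨k, rfl⟩
    show a ^ k * b ^ m = b ^ m * a ^ k
    exact (hab.zpow_zpow k m).eq
  -- finite index quotient
  have hrel := centralizer_case E a hinf
  rw [Subgroup.relIndex] at hrel
  have hfin : Finite ((Subgroup.centralizer (Subgroup.zpowers a : Set G)) ⧸
      ((Subgroup.zpowers a).subgroupOf (Subgroup.centralizer (Subgroup.zpowers a : Set G)))) := by
    rcases Nat.card_ne_zero.mp hrel with ⟨-, hf⟩
    exact hf
  -- pigeonhole on powers of b
  set C := Subgroup.centralizer (Subgroup.zpowers a : Set G) with hC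
  set HH := (Subgroup.zpowers a).subgroupOf C with hHH
  have := Finite.exists_ne_map_eq_of_infinite
    (fun m : ℤ => (QuotientGroup.mk (⟨b ^ m, hbmem m⟩ : C) : C ⧸ HH))
  obtain ⟨m, m', hne, heq⟩ := this
  rw [QuotientGroup.eq] at heq
  rw [hHH, Subgroup.mem_subgroupOf] at heq
  have hcoe : (((⟨b ^ m, hbmem m⟩ : C)⁻¹ * ⟨b ^ m', hbmem m'⟩ : C) : G) = b ^ (m' - m) := by
    show (b ^ m)⁻¹ * b ^ m' = b ^ (m' - m)
    rw [← zpow_neg, ← zpow_add]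
    congr 1
    omega
  rw [hcoe] at heq
  obtain ⟨k, hk⟩ := Subgroup.mem_zpowers_iff.mp heq
  -- transfer to H and then to ℤⁿ
  have hk' : a' ^ k = b' ^ (m' - m) := by
    apply Subtype.ext
    rw [Subgroup.coe_zpow, Subgroup.coe_zpow]
    exact hk
  have hφ : Multiplicative.ofAdd ((k : ℤ) • (Pi.single i0 1 : Fin n → ℤ)) =
      Multiplicative.ofAdd ((m' - m) • (Pi.single i1 1 : Fin n → ℤ)) := by
    rw [← hXk k, ← hYk (m' - m), hk']
  have hpi : ((k : ℤ) • Pi.single i0 1 : Fin n → ℤ) = (m' - m) • Pi.single i1 1 := by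
    have h2 := congrArg Multiplicative.toAdd hφ
    simpa using h2
  have h0 := congrFun hpi i1
  have h1 : ((k : ℤ) • Pi.single i0 1 : Fin n → ℤ) i1 = 0 := by
    simp [Pi.single_eq_of_ne (Ne.symm hi01)]
  have h2 : ((m' - m : ℤ) • Pi.single i1 1 : Fin n → ℤ) i1 = m' - m := by
    simp [Pi.single_eq_same]
  rw [h1, h2] at h0
  omega

theorem main_thm (hG : IsHyperbolicGroup G) :
    (∀ g : G, Infinite (Subgroup.zpowers g) →
      (Subgroup.zpowers g).relIndex (Subgroup.centralizer (Subgroup.zpowers g : Set G)) ≠ 0 ∧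
      (Subgroup.zpowers g).relIndex (Subgroup.normalizer (Subgroup.zpowers g : Set G)) ≠ 0) ∧
    ∀ n : ℕ, 2 ≤ n → ∀ H : Subgroup G, ¬ Nonempty (H ≃* Multiplicative (Fin n → ℤ)) := by
  obtain ⟨E⟩ := isHyperbolic_geom hG
  exact ⟨fun g hg => ⟨centralizer_case E g hg, normalizer_case E g hg⟩,
    fun n hn H => no_zn E n hn H⟩

end HypAux

theorem hyperbolic_cyclic_subgroups (G : Type) [Group G] (hG : IsHyperbolicGroup G) :
    (∀ g : G, Infinite (Subgroup.zpowers g) →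
      (Subgroup.zpowers g).relIndex (Subgroup.centralizer (Subgroup.zpowers g : Set G)) ≠ 0 ∧
      (Subgroup.zpowers g).relIndex (Subgroup.normalizer (Subgroup.zpowers g : Set G)) ≠ 0) ∧
    ∀ n : ℕ, 2 ≤ n → ∀ H : Subgroup G, ¬ Nonempty (H ≃* Multiplicative (Fin n → ℤ)) :=
  HypAux.main_thm hG
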